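/- Let A be an abelian group, 𝒯 a directed poset and X : 𝒯 → Set_* a diagram of pointed sets. If 𝒯 is ℵ₁-directed (every countable subset of 𝒯 has an upper bound in 𝒯), then the natural map ρ : (lim_𝒯 X)∧A → lim_𝒯(X∧A) is an isomorphism. -/

import Mathlib

open CategoryTheory Finsupp

universe u v w

/-- The smash product `Y ∧ A` of a pointed set `(Y, y0)` with an abelian group `A`:
the group of finitely supported functions `Y →₀ A` vanishing at the basepoint,
i.e. `⊕_{y ∈ Y∖{y0}} A`. -/
def Smash (Y : Type u) (y0 : Y) (A : Type v) [AddCommGroup A] :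
    AddSubgroup (Y →₀ A) where
  carrier := {f | f y0 = 0}
  add_mem' := by
    intro a b ha hb
    simp only [Set.mem_setOf_eq, Finsupp.add_apply] at *
    rw [ha, hb, add_zero]
  zero_mem' := by simp
  neg_mem' := by
    intro a ha
    simp only [Set.mem_setOf_eq, Finsupp.neg_apply] at *
    rw [ha, neg_zero]

theorem mem_smash {Y : Type u} {y0 : Y} {A : Type v} [AddCommGroup A] {f : Y →₀ A} :
    f ∈ Smash Y y0 A ↔ f y0 = 0 := Iff.rfl

/-- The pushforward homomorphism `g_* : Y∧A → Z∧A` induced by a (pointed) map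
`g : Y → Z`: `(g_* f)(z) = ∑_{y : g y = z} f y` for `z ≠ z0`, and `(g_* f)(z0) = 0`. -/
noncomputable def smashMap {Y : Type u} {Z : Type v} (y0 : Y) (z0 : Z) (g : Y → Z)
    (A : Type w) [AddCommGroup A] :
    Smash Y y0 A →+ Smash Z z0 A where
  toFun f := ⟨(Finsupp.mapDomain g f.1).erase z0, Finsupp.erase_same⟩
  map_zero' := by
    apply Subtype.ext
    simp
  map_add' f₁ f₂ := by
    apply Subtype.ext
    show (Finsupp.mapDomain g ((f₁ : Y →₀ A) + (f₂ : Y →₀ A))).erase z0 = _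
    rw [Finsupp.mapDomain_add, Finsupp.erase_add]
    rfl

theorem smashMap_comp {Y : Type u} {Z : Type v} {W : Type w} (y0 : Y) (z0 : Z) (w0 : W)
    (g : Y → Z) (g' : Z → W) (hg' : g' z0 = w0)
    (A : Type*) [AddCommGroup A] (f : Smash Y y0 A) :
    smashMap z0 w0 g' A (smashMap y0 z0 g A f) = smashMap y0 w0 (g' ∘ g) A f := by
  classical
  apply Subtype.ext
  show (Finsupp.mapDomain g' ((Finsupp.mapDomain g f.1).erase z0)).erase w0
      = (Finsupp.mapDomain (g' ∘ g) f.1).erase w0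
  rw [Finsupp.mapDomain_comp]
  set h := Finsupp.mapDomain g f.1 with hh
  have key : Finsupp.mapDomain g' (h.erase z0)
      = Finsupp.mapDomain g' h - Finsupp.single w0 (h z0) := by
    have h1 : h.erase z0 = h - Finsupp.single z0 (h z0) := by
      ext a
      by_cases ha : a = z0
      · subst ha; simp
      · simp [Finsupp.erase_ne ha, Finsupp.single_apply, Ne.symm ha, ha]
    rw [h1]
    have h2 := map_sub (Finsupp.mapDomain.addMonoidHom g') h (Finsupp.single z0 (h z0))
    simp only [Finsupp.mapDomain.addMonoidHom_apply] at h2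
    rw [h2, Finsupp.mapDomain_single, hg']
  rw [key]
  ext a
  by_cases ha : a = w0
  · subst ha; simp
  · simp [Finsupp.erase_ne ha, Finsupp.single_apply, Ne.symm ha, ha]
/-- The inverse limit of a diagram of pointed sets, as a subset of the product. -/
def plim {D : Type u} [Category.{v} D] (F : D ⥤ Pointed.{w}) :
    Set (∀ d : D, (F.obj d).X) :=
  {x | ∀ ⦃d d' : D⦄ (u : d ⟶ d'), (F.map u).toFun (x d) = x d'}

/-- The basepoint of the inverse limit of a diagram of pointed sets. -/
def plimPt {D : Type u} [Category.{v} D] (F : D ⥤ Pointed.{w}) : plim F :=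
  ⟨fun d => (F.obj d).point, fun _ _ u => (F.map u).map_point⟩

/-- The inverse limit `lim_D (X ∧ A)` of the diagram of abelian groups obtained by
smashing a diagram of pointed sets with an abelian group `A`. -/
noncomputable def glim {D : Type u} [Category.{v} D] (F : D ⥤ Pointed.{w})
    (A : Type*) [AddCommGroup A] :
    AddSubgroup (∀ d : D, Smash (F.obj d).X (F.obj d).point A) where
  carrier := {h | ∀ ⦃d d' : D⦄ (u : d ⟶ d'),
      smashMap (F.obj d).point (F.obj d').point (F.map u).toFun A (h d) = h d'}
  add_mem' := by
    intro a b ha hb d d' u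
    rw [Pi.add_apply, map_add, ha u, hb u]
    rfl
  zero_mem' := by
    intro d d' u
    rw [Pi.zero_apply, map_zero]
    rfl
  neg_mem' := by
    intro a ha d d' u
    rw [Pi.neg_apply, map_neg, ha u]
    rfl

/-- The natural map `ρ : (lim_D X) ∧ A → lim_D (X ∧ A)`, whose component at `d`
is induced by the projection `lim_D X → X d`. -/
noncomputable def rho {D : Type u} [Category.{v} D] (F : D ⥤ Pointed.{w})
    (A : Type*) [AddCommGroup A] :
    Smash (plim F) (plimPt F) A →+ glim F A where
  toFun f := ⟨fun d => smashMap (plimPt F) (F.obj d).point (fun x => x.1 d) A f, by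
    intro d d' u
    rw [smashMap_comp (plimPt F) (F.obj d).point (F.obj d').point _ _ (F.map u).map_point A f]
    have : ((F.map u).toFun ∘ fun x : plim F => x.1 d) = fun x : plim F => x.1 d' := by
      funext x
      exact x.2 u
    rw [this]⟩
  map_zero' := by
    apply Subtype.ext
    funext d
    show smashMap (plimPt F) (F.obj d).point (fun x => x.1 d) A 0 = (0 : Smash _ _ A)
    exact map_zero _
  map_add' f₁ f₂ := by
    apply Subtype.ext
    funext d
    show smashMap (plimPt F) (F.obj d).point (fun x => x.1 d) A (f₁ + f₂)
        = smashMap (plimPt F) (F.obj d).point (fun x => x.1 d) A f₁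
          + smashMap (plimPt F) (F.obj d).point (fun x => x.1 d) A f₂
    exact map_add _ f₁ f₂

open Opposite

section Aux

variable {T : Type u} [PartialOrder T] (F : Tᵒᵖ ⥤ Pointed.{w})

/-- Transition map of the diagram `F` along `s ≤ t`. -/
def tr {s t : T} (hst : s ≤ t) : (F.obj (op t)).X → (F.obj (op s)).X :=
  (F.map (homOfLE hst).op).toFun

theorem tr_self (t : T) (x : (F.obj (op t)).X) : tr F (le_refl t) x = x := by
  have h1 : (homOfLE (le_refl t)).op = 𝟙 (op t) := rfl
  rw [tr, h1, F.map_id]; rfl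

theorem tr_trans {s t u : T} (hst : s ≤ t) (htu : t ≤ u) (x : (F.obj (op u)).X) :
    tr F hst (tr F htu x) = tr F (le_trans hst htu) x := by
  have h1 : (homOfLE (le_trans hst htu)).op = (homOfLE htu).op ≫ (homOfLE hst).op := rfl
  rw [tr, tr, tr, h1, F.map_comp]; rfl

theorem map_eq_tr {d d' : Tᵒᵖ} (u : d ⟶ d') (x : (F.obj d).X) :
    (F.map u).toFun x = tr F (leOfHom u.unop) x := by
  have h1 : u = (homOfLE (leOfHom u.unop)).op := Subsingleton.elim _ _
  rw [h1]; rfl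

end Aux

theorem smashMap_support_subset {Y : Type u} {Z : Type v} (y0 : Y) (z0 : Z) (g : Y → Z)
    (A : Type w) [AddCommGroup A] (f : Smash Y y0 A) [DecidableEq Z] :
    (smashMap y0 z0 g A f).1.support ⊆ f.1.support.image g := by
  classical
  have hd : (smashMap y0 z0 g A f).1 = (Finsupp.mapDomain g f.1).erase z0 := rfl
  intro z hz
  rw [Finsupp.mem_support_iff, hd] at hz
  have hz0 : z ≠ z0 := by rintro rfl; exact hz Finsupp.erase_same
  rw [Finsupp.erase_ne hz0, ← Finsupp.mem_support_iff] at hz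
  exact Finsupp.mapDomain_support hz

theorem smash_struct {Y : Type u} {Z : Type v} (y0 : Y) (z0 : Z) (g : Y → Z)
    (A : Type w) [AddCommGroup A] (f : Smash Y y0 A) [DecidableEq Z]
    (hcard : f.1.support.card ≤ (smashMap y0 z0 g A f).1.support.card) :
    Set.InjOn g ↑f.1.support ∧
      (smashMap y0 z0 g A f).1.support = f.1.support.image g ∧
      ∀ y ∈ f.1.support, (smashMap y0 z0 g A f).1 (g y) = f.1 y := by
  classical
  have hd : (smashMap y0 z0 g A f).1 = (Finsupp.mapDomain g f.1).erase z0 := rfl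
  have hsub : (smashMap y0 z0 g A f).1.support ⊆ f.1.support.image g :=
    smashMap_support_subset y0 z0 g A f
  have hc1 : (f.1.support.image g).card ≤ f.1.support.card := Finset.card_image_le
  have hc2 : f.1.support.card ≤ (f.1.support.image g).card :=
    hcard.trans (Finset.card_le_card hsub)
  have himgcard : (f.1.support.image g).card = f.1.support.card := le_antisymm hc1 hc2
  have hinj : Set.InjOn g ↑f.1.support := Finset.card_image_iff.mp himgcard
  have hsupp : (smashMap y0 z0 g A f).1.support = f.1.support.image g :=
    Finset.eq_of_subset_of_card_le hsub (himgcard.trans_le hcard)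
  refine ⟨hinj, hsupp, fun y hy => ?_⟩
  have hz0 : g y ≠ z0 := by
    intro e
    have hmem : z0 ∈ (smashMap y0 z0 g A f).1.support := by
      rw [hsupp, ← e]; exact Finset.mem_image_of_mem g hy
    rw [Finsupp.mem_support_iff, hd] at hmem
    exact hmem Finsupp.erase_same
  rw [hd, Finsupp.erase_ne hz0]
  exact Finsupp.mapDomain_apply' ↑f.1.support f.1 (Set.Subset.refl _) hinj hy

/-- Let `A` be an abelian group, `T` a directed poset and `F : Tᵒᵖ ⥤ Set_*` a diagram
of pointed sets.  If `T` is `ℵ₁`-directed (every countable subset of `T` has an upper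
bound in `T`), then the natural map `ρ : (lim_T X) ∧ A → lim_T (X ∧ A)` is an
isomorphism. -/
theorem stmt10 {T : Type u} [PartialOrder T] [IsDirected T (· ≤ ·)] [Nonempty T]
    (F : Tᵒᵖ ⥤ Pointed.{w}) (A : Type*) [AddCommGroup A]
    (hT : ∀ S : Set T, S.Countable → ∃ t : T, ∀ s ∈ S, s ≤ t) :
    Function.Bijective (rho F A) := by
  classical
  constructor
  · -- injectivity
    refine (injective_iff_map_eq_zero (rho F A)).2 (fun f hf => ?_)
    apply Subtype.ext
    apply Finsupp.ext
    intro x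
    simp only [ZeroMemClass.coe_zero, Finsupp.coe_zero, Pi.zero_apply]
    by_contra hx0
    have hxs : x ∈ f.1.support := Finsupp.mem_support_iff.2 hx0
    set s : Finset (plim F) := insert (plimPt F) f.1.support with hs
    have hw : ∀ p : plim F × plim F, ∃ t : T, p.1 ≠ p.2 → p.1.1 (op t) ≠ p.2.1 (op t) := by
      intro p
      by_cases hp : p.1 = p.2
      · exact ⟨Classical.arbitrary T, fun h => absurd hp h⟩
      · have hne : p.1.1 ≠ p.2.1 := fun e => hp (Subtype.ext e)
        obtain ⟨d, hd⟩ := Function.ne_iff.1 hne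
        exact ⟨d.unop, fun _ => hd⟩
    choose w hwspec using hw
    obtain ⟨t, ht⟩ := Finset.exists_le ((s ×ˢ s).image w)
    have hinj : ∀ p q : plim F, p ∈ s → q ∈ s → p.1 (op t) = q.1 (op t) → p = q := by
      intro p q hp hq he
      by_contra hpq
      have h1 := hwspec (p, q) hpq
      have h2 : w (p, q) ≤ t :=
        ht _ (Finset.mem_image_of_mem w (Finset.mem_product.2 ⟨hp, hq⟩))
      apply h1
      rw [← p.2 ((homOfLE h2).op), ← q.2 ((homOfLE h2).op), he]
    have hxpt : x ≠ plimPt F := fun e => hx0 (by rw [e]; exact f.2)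
    have hxmem : x ∈ s := Finset.mem_insert_of_mem hxs
    have hne' : x.1 (op t) ≠ (F.obj (op t)).point := fun e =>
      hxpt (hinj x (plimPt F) hxmem (Finset.mem_insert_self _ _) e)
    have hinjOn : Set.InjOn (fun p : plim F => p.1 (op t)) ↑s := fun p hp q hq e =>
      hinj p q hp hq e
    have heq : Finsupp.mapDomain (fun p : plim F => p.1 (op t)) f.1 (x.1 (op t)) = f.1 x :=
      Finsupp.mapDomain_apply' ↑s f.1 (Finset.coe_subset.2 (Finset.subset_insert _ _))
        hinjOn hxmem
    have h0 : (Finsupp.mapDomain (fun p : plim F => p.1 (op t)) f.1).erase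
        (F.obj (op t)).point = 0 := by
      have h1 : ((rho F A) f).1 (op t) = 0 := by rw [hf]; rfl
      exact congrArg Subtype.val h1
    refine hx0 ?_
    rw [← heq,
      ← Finsupp.erase_ne (f := Finsupp.mapDomain (fun p : plim F => p.1 (op t)) f.1) hne',
      h0]
    rfl
  · -- surjectivity
    intro h
    have hcompat : ∀ {s t : T} (hst : s ≤ t),
        smashMap (F.obj (op t)).point (F.obj (op s)).point (tr F hst) A (h.1 (op t)) =
          h.1 (op s) := fun {s t} hst => h.2 ((homOfLE hst).op)
    have hmono : ∀ {s t : T}, s ≤ t →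
        (h.1 (op s)).1.support.card ≤ (h.1 (op t)).1.support.card := by
      intro s t hst
      rw [← hcompat hst]
      exact le_trans (Finset.card_le_card (smashMap_support_subset _ _ _ A _))
        Finset.card_image_le
    have hbdd : BddAbove (Set.range fun t : T => (h.1 (op t)).1.support.card) := by
      by_contra hb
      rw [not_bddAbove_iff] at hb
      have hstep : ∀ n : ℕ, ∃ t : T, n < (h.1 (op t)).1.support.card := by
        intro n
        obtain ⟨y, ⟨t, rfl⟩, hy⟩ := hb n
        exact ⟨t, hy⟩
      choose g hg using hstep
      obtain ⟨t1, ht1⟩ := hT (Set.range g) (Set.countable_range g)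
      have hall : ∀ n : ℕ, n < (h.1 (op t1)).1.support.card := fun n =>
        lt_of_lt_of_le (hg n) (hmono (ht1 _ ⟨n, rfl⟩))
      exact lt_irrefl _ (hall _)
    obtain ⟨t0, ht0⟩ := Nat.sSup_mem
      (Set.range_nonempty fun t : T => (h.1 (op t)).1.support.card) hbdd
    have hmax : ∀ t : T, (h.1 (op t)).1.support.card ≤ (h.1 (op t0)).1.support.card := by
      intro t
      exact (le_csSup hbdd ⟨t, rfl⟩).trans_eq ht0.symm
    have hstruct : ∀ {s t : T} (hst : s ≤ t), t0 ≤ s →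
        Set.InjOn (tr F hst) ↑(h.1 (op t)).1.support ∧
          (h.1 (op s)).1.support = (h.1 (op t)).1.support.image (tr F hst) ∧
          ∀ y ∈ (h.1 (op t)).1.support,
            (h.1 (op s)).1 (tr F hst y) = (h.1 (op t)).1 y := by
      intro s t hst hs
      have hc : (h.1 (op t)).1.support.card ≤
          (smashMap (F.obj (op t)).point (F.obj (op s)).point (tr F hst) A
            (h.1 (op t))).1.support.card := by
        rw [hcompat hst]
        exact le_trans (hmax t) (hmono hs)
      have := smash_struct _ _ _ A _ hc
      rwa [hcompat hst] at this
    have hsig : ∀ (t : T) (ht : t0 ≤ t) (z : (F.obj (op t0)).X),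
        ∃ y : (F.obj (op t)).X, z ∈ (h.1 (op t0)).1.support →
          y ∈ (h.1 (op t)).1.support ∧ tr F ht y = z := by
      intro t ht z
      by_cases hz : z ∈ (h.1 (op t0)).1.support
      · rw [(hstruct ht le_rfl).2.1] at hz
        obtain ⟨y, hy, hyz⟩ := Finset.mem_image.1 hz
        exact ⟨y, fun _ => ⟨hy, hyz⟩⟩
      · exact ⟨(F.obj (op t)).point, fun hz' => absurd hz' hz⟩
    choose σ hσ using hsig
    have huniq : ∀ (t : T) (ht : t0 ≤ t) {y y' : (F.obj (op t)).X},
        y ∈ (h.1 (op t)).1.support → y' ∈ (h.1 (op t)).1.support →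
        tr F ht y = tr F ht y' → y = y' :=
      fun t ht {y y'} hy hy' he => (hstruct ht le_rfl).1 hy hy' he
    have hval : ∀ (t : T) (ht : t0 ≤ t) (z : (F.obj (op t0)).X)
        (hz : z ∈ (h.1 (op t0)).1.support),
        (h.1 (op t)).1 (σ t ht z) = (h.1 (op t0)).1 z := by
      intro t ht z hz
      have hv := (hstruct ht le_rfl).2.2 (σ t ht z) (hσ t ht z hz).1
      rw [(hσ t ht z hz).2] at hv
      exact hv.symm
    have hσcomp : ∀ (s t : T) (hs : t0 ≤ s) (hst : s ≤ t) (z : (F.obj (op t0)).X)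
        (hz : z ∈ (h.1 (op t0)).1.support),
        tr F hst (σ t (hs.trans hst) z) = σ s hs z := by
      intro s t hs hst z hz
      have h1 : tr F hst (σ t (hs.trans hst) z) ∈ (h.1 (op s)).1.support := by
        rw [(hstruct hst hs).2.1]
        exact Finset.mem_image_of_mem _ (hσ t (hs.trans hst) z hz).1
      apply huniq s hs h1 (hσ s hs z hz).1
      rw [tr_trans, (hσ t (hs.trans hst) z hz).2, (hσ s hs z hz).2]
    have hσ0 : ∀ (z : (F.obj (op t0)).X), z ∈ (h.1 (op t0)).1.support →
        σ t0 le_rfl z = z := fun z hz =>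
      (tr_self F t0 _).symm.trans (hσ t0 le_rfl z hz).2
    -- construct the limit elements
    have hxex : ∀ z : (F.obj (op t0)).X, ∃ x : plim F,
        z ∈ (h.1 (op t0)).1.support → ∀ (t : T) (ht : t0 ≤ t), x.1 (op t) = σ t ht z := by
      intro z
      by_cases hz : z ∈ (h.1 (op t0)).1.support
      · have hub : ∀ d : Tᵒᵖ, ∃ u : T, d.unop ≤ u ∧ t0 ≤ u := fun d => exists_ge_ge _ _
        choose uu hu1 hu2 using hub
        have hind : ∀ (d : Tᵒᵖ) (t : T) (h1 : d.unop ≤ t) (h2 : t0 ≤ t),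
            tr F h1 (σ t h2 z) = tr F (hu1 d) (σ (uu d) (hu2 d) z) := by
          intro d t h1 h2
          obtain ⟨v, hv1, hv2⟩ := exists_ge_ge t (uu d)
          rw [← hσcomp t v h2 hv1 z hz, ← hσcomp (uu d) v (hu2 d) hv2 z hz,
            tr_trans, tr_trans]
        refine ⟨⟨fun d => tr F (hu1 d) (σ (uu d) (hu2 d) z), ?_⟩, ?_⟩
        · intro d d' u
          rw [map_eq_tr F u]
          exact (tr_trans F _ _ _).trans
            (hind d' (uu d) ((leOfHom u.unop).trans (hu1 d)) (hu2 d))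
        · intro _ t ht
          exact ((tr_self F t _).symm.trans (hind (op t) t le_rfl ht)).symm
      · exact ⟨plimPt F, fun hz' => absurd hz' hz⟩
    choose x hx using hxex
    have hxproj : ∀ (z : (F.obj (op t0)).X), z ∈ (h.1 (op t0)).1.support →
        (x z).1 (op t0) = z := fun z hz => (hx z hz t0 le_rfl).trans (hσ0 z hz)
    have hxne : ∀ z ∈ (h.1 (op t0)).1.support, x z ≠ plimPt F := by
      intro z hz he
      have h1 := hxproj z hz
      rw [he] at h1
      rw [Finsupp.mem_support_iff, ← h1] at hz
      exact hz (h.1 (op t0)).2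
    set fv : ↑(plim F) →₀ A :=
      ∑ z ∈ (h.1 (op t0)).1.support, Finsupp.single (x z) ((h.1 (op t0)).1 z) with hfv
    have hfv0 : fv ∈ Smash ↑(plim F) (plimPt F) A := by
      rw [mem_smash, hfv, Finsupp.finset_sum_apply]
      exact Finset.sum_eq_zero fun z hz => Finsupp.single_eq_of_ne' (hxne z hz)
    have hkey : ∀ (t : T) (ht : t0 ≤ t),
        ((rho F A) ⟨fv, hfv0⟩).1 (op t) = h.1 (op t) := by
      intro t ht
      apply Subtype.ext
      show (Finsupp.mapDomain (fun p : plim F => p.1 (op t)) fv).erase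
          (F.obj (op t)).point = (h.1 (op t)).1
      have e1 : Finsupp.mapDomain (fun p : plim F => p.1 (op t)) fv =
          ∑ z ∈ (h.1 (op t0)).1.support,
            Finsupp.single (σ t ht z) ((h.1 (op t)).1 (σ t ht z)) := by
        rw [hfv, Finsupp.mapDomain_finset_sum]
        refine Finset.sum_congr rfl fun z hz => ?_
        rw [Finsupp.mapDomain_single, hx z hz t ht, hval t ht z hz]
      have e2 : ∑ z ∈ (h.1 (op t0)).1.support,
          Finsupp.single (σ t ht z) ((h.1 (op t)).1 (σ t ht z)) =
          ∑ y ∈ (h.1 (op t)).1.support, Finsupp.single y ((h.1 (op t)).1 y) := by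
        refine Finset.sum_bij (fun z hz => σ t ht z) (fun z hz => (hσ t ht z hz).1)
          ?_ ?_ (fun z hz => rfl)
        · intro z hz z' hz' he
          have hc := congrArg (tr F ht) he
          rw [(hσ t ht z hz).2, (hσ t ht z' hz').2] at hc
          exact hc
        · intro y hy
          have hzmem : tr F ht y ∈ (h.1 (op t0)).1.support := by
            rw [(hstruct ht le_rfl).2.1]
            exact Finset.mem_image_of_mem _ hy
          exact ⟨tr F ht y, hzmem,
            huniq t ht (hσ t ht _ hzmem).1 hy (hσ t ht _ hzmem).2⟩
      rw [e1, e2]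
      have e3 : ∑ y ∈ (h.1 (op t)).1.support, Finsupp.single y ((h.1 (op t)).1 y) =
          (h.1 (op t)).1 := Finsupp.sum_single _
      rw [e3]
      ext a
      by_cases ha : a = (F.obj (op t)).point
      · rw [ha, Finsupp.erase_same]
        exact ((h.1 (op t)).2).symm
      · rw [Finsupp.erase_ne ha]
    refine ⟨⟨fv, hfv0⟩, ?_⟩
    apply Subtype.ext
    funext d
    induction d using Opposite.rec with
    | op t =>
      obtain ⟨u, hu1, hu2⟩ := exists_ge_ge t t0
      have r1 := ((rho F A) ⟨fv, hfv0⟩).2 ((homOfLE hu1).op)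
      have r2 := h.2 ((homOfLE hu1).op)
      rw [← r1, ← r2, hkey u hu2]
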